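/- Let α be a well order and let s, t, u be finite sequences over α such that t is empty or begins with an element strictly below all elements of u. Then u * s ≤_s u * t implies s ≤_s t. -/

import Mathlib

/-- The weak gap condition on finite sequences over a linear order. -/
def WeakGap {α : Type*} [LinearOrder α] (s t : List α) : Prop :=
  ∃ f : Fin s.length → Fin t.length,
    StrictMono f ∧
    (∀ i, s.get i ≤ t.get (f i)) ∧
    ∀ (i : ℕ) (h : i + 1 < s.length) (j : Fin t.length),
      f ⟨i, Nat.lt_of_succ_lt h⟩ < j → j < f ⟨i + 1, h⟩ → s.get ⟨i + 1, h⟩ ≤ t.get j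

/-- The strong gap condition on finite sequences over a linear order:
as the weak one, but additionally respecting the outer gap. -/
def StrongGap {α : Type*} [LinearOrder α] (s t : List α) : Prop :=
  ∃ f : Fin s.length → Fin t.length,
    StrictMono f ∧
    (∀ i, s.get i ≤ t.get (f i)) ∧
    (∀ (i : ℕ) (h : i + 1 < s.length) (j : Fin t.length),
      f ⟨i, Nat.lt_of_succ_lt h⟩ < j → j < f ⟨i + 1, h⟩ → s.get ⟨i + 1, h⟩ ≤ t.get j) ∧
    ∀ (h : 0 < s.length) (j : Fin t.length), j < f ⟨0, h⟩ → s.get ⟨0, h⟩ ≤ t.get j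

private lemma aux_le_apply {a b : ℕ} {f : Fin a → Fin b} (hf : StrictMono f) :
    ∀ i : Fin a, (i : ℕ) ≤ (f i : ℕ) := by
  rintro ⟨i, hi⟩
  induction i with
  | zero => exact Nat.zero_le _
  | succ k ih =>
    have h1 : (f ⟨k, Nat.lt_of_succ_lt hi⟩ : ℕ) < (f ⟨k + 1, hi⟩ : ℕ) :=
      hf (Fin.mk_lt_mk.mpr (Nat.lt_succ_self k))
    have h2 : k ≤ (f ⟨k, Nat.lt_of_succ_lt hi⟩ : ℕ) := ih (Nat.lt_of_succ_lt hi)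
    show k + 1 ≤ (f ⟨k + 1, hi⟩ : ℕ)
    omega

/-- Left cancellation for the strong gap condition. -/
theorem strongGap_remove_head {α : Type*} [LinearOrder α] [WellFoundedLT α]
    (s t u : List α)
    (hhead : ∀ a, t.head? = some a → ∀ b ∈ u, a < b) :
    StrongGap (u ++ s) (u ++ t) → StrongGap s t := by
  rintro ⟨f, hmono, hle, hgap, houter⟩
  have hlen : (u ++ s).length = u.length + s.length := List.length_append
  have hlent : (u ++ t).length = u.length + t.length := List.length_append
  -- Case t = []
  rcases Nat.eq_zero_or_pos t.length with ht0 | htpos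
  · have hsl : s.length = 0 := by
      have hcard := Fintype.card_le_of_injective f hmono.injective
      simp only [Fintype.card_fin] at hcard
      omega
    refine ⟨fun i => absurd i.isLt (by omega), ?_, ?_, ?_, ?_⟩
    · intro i j hij; exact absurd i.isLt (by omega)
    · intro i; exact absurd i.isLt (by omega)
    · intro i h; exact absurd h (by omega)
    · intro h; exact absurd h (by omega)
  -- t is nonempty; its head is below everything in u
  have ha : ∀ b ∈ u, t.get ⟨0, htpos⟩ < b := by
    refine hhead _ ?_
    cases t with
    | nil => simp at htpos
    | cons a t' => rfl
  have hfge := aux_le_apply hmono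
  -- every index of u is mapped into the u-part
  have huidx : ∀ (i : ℕ) (hi : i < u.length), (f ⟨i, by omega⟩ : ℕ) < u.length := by
    intro i
    induction i using Nat.strong_induction_on with
    | _ i IH =>
      intro hi
      by_contra hge
      push_neg at hge
      have hia : i < (u ++ s).length := by omega
      have hub : t.get ⟨0, htpos⟩ < (u ++ s).get ⟨i, hia⟩ := by
        have e : (u ++ s).get ⟨i, hia⟩ = u.get ⟨i, hi⟩ := by
          simp only [List.get_eq_getElem]
          exact List.getElem_append_left hi
        rw [e]
        exact ha _ (List.get_mem u ⟨i, hi⟩)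
      have hjlt : u.length < (u ++ t).length := by omega
      have et : (u ++ t).get ⟨u.length, hjlt⟩ = t.get ⟨0, htpos⟩ := by
        simp only [List.get_eq_getElem]
        rw [List.getElem_append_right (le_refl u.length)]
        congr 1
        omega
      have hsmall : (u ++ s).get ⟨i, hia⟩ ≤ t.get ⟨0, htpos⟩ := by
        rcases eq_or_lt_of_le hge with heq | hlt
        · have h1 := hle ⟨i, hia⟩
          have e : (u ++ t).get (f ⟨i, hia⟩) = t.get ⟨0, htpos⟩ := by
            simp only [List.get_eq_getElem]
            rw [List.getElem_append_right (by omega)]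
            congr 1
            omega
          rw [e] at h1
          exact h1
        · cases i with
          | zero =>
            have P0 : 0 < (u ++ s).length := by omega
            have key := houter P0 ⟨u.length, hjlt⟩
              (Fin.lt_def.mpr (show u.length < (f ⟨0, P0⟩ : ℕ) by omega))
            rw [et] at key
            exact key
          | succ k =>
            have hk := IH k (by omega) (by omega)
            have hklt : k + 1 < (u ++ s).length := hia
            have key := hgap k hklt ⟨u.length, hjlt⟩
              (Fin.lt_def.mpr (show (f ⟨k, Nat.lt_of_succ_lt hklt⟩ : ℕ) < u.length by omega))
              (Fin.lt_def.mpr (show u.length < (f ⟨k + 1, hklt⟩ : ℕ) by omega))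
            rw [et] at key
            exact key
      exact absurd hsmall (not_le.mpr hub)
  -- set up the map for s, t
  have hp : ∀ i : ℕ, i < s.length → u.length + i < (u ++ s).length := fun i hi => by omega
  have hbound : ∀ (i : ℕ) (hi : i < s.length),
      (f ⟨u.length + i, hp i hi⟩ : ℕ) - u.length < t.length := by
    intro i hi
    have h2 : (f ⟨u.length + i, hp i hi⟩ : ℕ) < (u ++ t).length := (f _).isLt
    have h1 : u.length + i ≤ (f ⟨u.length + i, hp i hi⟩ : ℕ) :=
      hfge ⟨u.length + i, hp i hi⟩
    omega
  refine ⟨fun i => ⟨(f ⟨u.length + (i : ℕ), hp (i : ℕ) i.isLt⟩ : ℕ) - u.length,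
      hbound (i : ℕ) i.isLt⟩, ?_, ?_, ?_, ?_⟩
  · -- strict mono
    intro i j hij
    have hij' : (i : ℕ) < (j : ℕ) := hij
    have hm : (f ⟨u.length + (i : ℕ), hp (i : ℕ) i.isLt⟩ : ℕ)
        < (f ⟨u.length + (j : ℕ), hp (j : ℕ) j.isLt⟩ : ℕ) :=
      hmono (Fin.mk_lt_mk.mpr (by omega))
    have hbi : u.length + (i : ℕ) ≤ (f ⟨u.length + (i : ℕ), hp (i : ℕ) i.isLt⟩ : ℕ) :=
      hfge ⟨u.length + (i : ℕ), hp (i : ℕ) i.isLt⟩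
    exact Fin.mk_lt_mk.mpr (by omega)
  · -- pointwise
    intro i
    have h1 := hle ⟨u.length + (i : ℕ), hp (i : ℕ) i.isLt⟩
    have e1 : (u ++ s).get ⟨u.length + (i : ℕ), hp (i : ℕ) i.isLt⟩ = s.get i := by
      simp only [List.get_eq_getElem]
      rw [List.getElem_append_right (by omega)]
      congr 1
      omega
    have e2 : (u ++ t).get (f ⟨u.length + (i : ℕ), hp (i : ℕ) i.isLt⟩) =
        t.get ⟨(f ⟨u.length + (i : ℕ), hp (i : ℕ) i.isLt⟩ : ℕ) - u.length,
          hbound (i : ℕ) i.isLt⟩ := by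
      simp only [List.get_eq_getElem]
      rw [List.getElem_append_right (by
        have h3 : u.length + (i : ℕ) ≤ (f ⟨u.length + (i : ℕ), hp (i : ℕ) i.isLt⟩ : ℕ) :=
          hfge ⟨u.length + (i : ℕ), hp (i : ℕ) i.isLt⟩
        show u.length ≤ (f ⟨u.length + (i : ℕ), hp (i : ℕ) i.isLt⟩ : ℕ)
        omega)]
    rw [e1, e2] at h1
    exact h1
  · -- inner gap
    intro i h j hj1 hj2
    have hj1' : (f ⟨u.length + i, hp i (Nat.lt_of_succ_lt h)⟩ : ℕ) - u.length < (j : ℕ) := hj1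
    have hj2' : (j : ℕ) < (f ⟨u.length + (i + 1), hp (i + 1) h⟩ : ℕ) - u.length := hj2
    have hb1 : u.length + i ≤ (f ⟨u.length + i, hp i (Nat.lt_of_succ_lt h)⟩ : ℕ) :=
      hfge ⟨u.length + i, hp i (Nat.lt_of_succ_lt h)⟩
    have hb2 : u.length + (i + 1) ≤ (f ⟨u.length + (i + 1), hp (i + 1) h⟩ : ℕ) :=
      hfge ⟨u.length + (i + 1), hp (i + 1) h⟩
    have pj : u.length + (j : ℕ) < (u ++ t).length := by omega
    have h2 : u.length + i + 1 < (u ++ s).length := hp (i + 1) h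
    have key := hgap (u.length + i) h2 ⟨u.length + (j : ℕ), pj⟩
      (Fin.lt_def.mpr (show (f ⟨u.length + i, hp i (Nat.lt_of_succ_lt h)⟩ : ℕ)
        < u.length + (j : ℕ) by omega))
      ((show (⟨u.length + (j : ℕ), pj⟩ : Fin (u ++ t).length)
          < f ⟨u.length + (i + 1), hp (i + 1) h⟩ from
        Fin.lt_def.mpr (show u.length + (j : ℕ)
          < (f ⟨u.length + (i + 1), hp (i + 1) h⟩ : ℕ) by omega)))
    have e1 : (u ++ s).get ⟨u.length + i + 1, h2⟩ = s.get ⟨i + 1, h⟩ := by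
      simp only [List.get_eq_getElem]
      rw [List.getElem_append_right (by omega)]
      congr 1
      omega
    have e2 : (u ++ t).get ⟨u.length + (j : ℕ), pj⟩ = t.get j := by
      simp only [List.get_eq_getElem]
      rw [List.getElem_append_right (by omega)]
      congr 1
      omega
    rw [e1, e2] at key
    exact key
  · -- outer gap
    intro h j hj
    have hj' : (j : ℕ) < (f ⟨u.length, hp 0 h⟩ : ℕ) - u.length := hj
    have hb0 : u.length ≤ (f ⟨u.length, hp 0 h⟩ : ℕ) := hfge ⟨u.length, hp 0 h⟩
    have pj : u.length + (j : ℕ) < (u ++ t).length := by omega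
    have e2 : (u ++ t).get ⟨u.length + (j : ℕ), pj⟩ = t.get j := by
      simp only [List.get_eq_getElem]
      rw [List.getElem_append_right (by omega)]
      congr 1
      omega
    rcases Nat.eq_zero_or_pos u.length with hn0 | hnpos
    · have P0 : 0 < (u ++ s).length := by omega
      have hfi : (f ⟨0, P0⟩ : ℕ) = (f ⟨u.length, hp 0 h⟩ : ℕ) :=
        congrArg Fin.val (congrArg f (Fin.ext (show (0 : ℕ) = u.length by omega)))
      have key := houter P0 ⟨u.length + (j : ℕ), pj⟩
        (Fin.lt_def.mpr (show u.length + (j : ℕ) < (f ⟨0, P0⟩ : ℕ) by omega))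
      have e3 : (u ++ s).get ⟨0, P0⟩ = s.get ⟨0, h⟩ := by
        simp only [List.get_eq_getElem]
        rw [List.getElem_append_right (by omega)]
        congr 1
        omega
      rw [e3, e2] at key
      exact key
    · have h2 : u.length - 1 + 1 < (u ++ s).length := by omega
      have hu := huidx (u.length - 1) (by omega)
      have hfi : (f ⟨u.length - 1 + 1, h2⟩ : ℕ) = (f ⟨u.length, hp 0 h⟩ : ℕ) :=
        congrArg Fin.val (congrArg f (Fin.ext (show u.length - 1 + 1 = u.length by omega)))
      have key := hgap (u.length - 1) h2 ⟨u.length + (j : ℕ), pj⟩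
        (Fin.lt_def.mpr (show (f ⟨u.length - 1, Nat.lt_of_succ_lt h2⟩ : ℕ)
          < u.length + (j : ℕ) by omega))
        (Fin.lt_def.mpr (show u.length + (j : ℕ)
          < (f ⟨u.length - 1 + 1, h2⟩ : ℕ) by omega))
      have e3 : (u ++ s).get ⟨u.length - 1 + 1, h2⟩ = s.get ⟨0, h⟩ := by
        simp only [List.get_eq_getElem]
        rw [List.getElem_append_right (by omega)]
        congr 1
        omega
      rw [e3, e2] at key
      exact key
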